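/- For all b and x: I_0(2√(b(b−a))) evaluated at a = x satisfies I_0(2√(b(b−x))) = J_0(2√(bx)) + ∫_0^b J_0(2√(xy)) · (b I_1(2√(b(b−y)))/√(b(b−y))) dy, as an identity of entire functions of (b,x). -/

import Mathlib

open MeasureTheory

/-- `J0c u = J₀(2√u) = ∑ (-1)ⁿ uⁿ/(n!)²` (entire). -/
noncomputable def J0c (u : ℂ) : ℂ := ∑' n : ℕ, (-1)^n * u^n / ((Nat.factorial n : ℂ))^2

/-- `I0c u = I₀(2√u) = ∑ uⁿ/(n!)²` (entire). -/
noncomputable def I0c (u : ℂ) : ℂ := ∑' n : ℕ, u^n / ((Nat.factorial n : ℂ))^2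

/-- `i1c b u = b I₁(2√(bu))/√(bu) = ∑ bⁿ⁺¹ uⁿ/(n!(n+1)!)` (entire). -/
noncomputable def i1c (b u : ℂ) : ℂ :=
  ∑' n : ℕ, b^(n+1) * u^n / ((Nat.factorial n : ℂ) * (Nat.factorial (n+1) : ℂ))

namespace I0aux

lemma fact_ne (n : ℕ) : ((n.factorial : ℕ) : ℂ) ≠ 0 :=
  Nat.cast_ne_zero.mpr (Nat.factorial_ne_zero n)

lemma one_le_fact (n : ℕ) : (1:ℝ) ≤ (n.factorial : ℝ) :=
  Nat.one_le_cast.mpr (Nat.factorial_pos n)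

lemma beta_nat (m n : ℕ) :
    (∫ t in (0:ℝ)..1, (t:ℂ)^m * (1-(t:ℂ))^n)
      = (m.factorial : ℂ) * (n.factorial : ℂ) / (((m+n+1).factorial) : ℂ) := by
  have hm : 0 < ((m:ℂ)+1).re := by simp; positivity
  have hn : 0 < ((n:ℂ)+1).re := by simp; positivity
  have hB := Complex.Gamma_mul_Gamma_eq_betaIntegral hm hn
  have hInt : Complex.betaIntegral ((m:ℂ)+1) ((n:ℂ)+1)
      = ∫ t in (0:ℝ)..1, (t:ℂ)^m * (1-(t:ℂ))^n := by
    rw [Complex.betaIntegral]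
    congr 1; funext t
    rw [add_sub_cancel_right, add_sub_cancel_right, Complex.cpow_natCast,
      Complex.cpow_natCast]
  have hGm : Complex.Gamma ((m:ℂ)+1) = (m.factorial : ℂ) := Complex.Gamma_nat_eq_factorial m
  have hGn : Complex.Gamma ((n:ℂ)+1) = (n.factorial : ℂ) := Complex.Gamma_nat_eq_factorial n
  have hGmn : Complex.Gamma ((m:ℂ)+1+((n:ℂ)+1)) = (((m+n+1).factorial) : ℂ) := by
    have : ((m:ℂ)+1+((n:ℂ)+1)) = ((m+n+1 : ℕ):ℂ) + 1 := by push_cast; ring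
    rw [this, Complex.Gamma_nat_eq_factorial]
  rw [hGm, hGn, hGmn, hInt] at hB
  field_simp [fact_ne] at hB ⊢
  rw [hB]; field_simp [fact_ne]; rw [mul_div_assoc, div_self (fact_ne _), mul_one]

/-- The master coefficient family. -/
noncomputable def aCoef (b x : ℂ) (p : ℕ × ℕ) : ℂ :=
  (-1)^p.1 * x^p.1 * b^p.1 * (b^2)^p.2 /
    ((p.1.factorial : ℂ) * (p.2.factorial : ℂ) * (((p.1+p.2).factorial) : ℂ))

lemma summable_norm_aCoef (b x : ℂ) : Summable fun p : ℕ × ℕ => ‖aCoef b x p‖ := by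
  have hg : Summable fun j : ℕ => (‖x‖*‖b‖)^j / (j.factorial : ℝ) :=
    Real.summable_pow_div_factorial _
  have hh : Summable fun i : ℕ => (‖b‖^2)^i / (i.factorial : ℝ) :=
    Real.summable_pow_div_factorial _
  refine Summable.of_nonneg_of_le (fun p => norm_nonneg _) (fun p => ?_)
    (hg.mul_of_nonneg hh (fun j => by positivity) (fun i => by positivity))
  obtain ⟨j, i⟩ := p
  have h1 : ‖aCoef b x (j, i)‖
      = (‖x‖*‖b‖)^j * (‖b‖^2)^i
        / ((j.factorial : ℝ) * (i.factorial : ℝ) * ((j+i).factorial : ℝ)) := by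
    simp [aCoef, norm_div, norm_mul, norm_pow]
    ring
  rw [h1]
  calc (‖x‖*‖b‖)^j * (‖b‖^2)^i
        / ((j.factorial : ℝ) * (i.factorial : ℝ) * ((j+i).factorial : ℝ))
      ≤ (‖x‖*‖b‖)^j * (‖b‖^2)^i / ((j.factorial : ℝ) * (i.factorial : ℝ)) := by
        apply div_le_div_of_nonneg_left (by positivity) (by positivity)
        exact le_mul_of_one_le_right (by positivity) (one_le_fact _)
    _ = (‖x‖*‖b‖)^j / (j.factorial : ℝ) * ((‖b‖^2)^i / (i.factorial : ℝ)) := by ring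

/-- Summing a summable family on `ℕ × ℕ` along antidiagonals. -/
lemma tsum_eq_tsum_antidiagonal {f : ℕ × ℕ → ℂ} (hf : Summable f) :
    ∑' p : ℕ × ℕ, f p = ∑' n : ℕ, ∑ kl ∈ Finset.HasAntidiagonal.antidiagonal n, f kl := by
  conv_rhs => congr; ext; rw [← Finset.sum_finset_coe, ← tsum_fintype (L := SummationFilter.unconditional _)]
  rw [← Finset.HasAntidiagonal.sigmaAntidiagonalEquivProd.tsum_eq f]
  exact Summable.tsum_sigma' (fun n => (hasSum_fintype _).summable)
    (Finset.HasAntidiagonal.sigmaAntidiagonalEquivProd.summable_iff.mpr hf)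

lemma lhs_eq (b x : ℂ) : I0c (b*(b-x)) = ∑' p : ℕ × ℕ, aCoef b x p := by
  rw [tsum_eq_tsum_antidiagonal ((summable_norm_aCoef b x).of_norm)]
  unfold I0c
  refine tsum_congr fun k => ?_
  rw [Finset.Nat.sum_antidiagonal_eq_sum_range_succ_mk]
  rw [show b - x = -x + b by ring, mul_pow, add_pow, Finset.mul_sum, Finset.sum_div]
  refine Finset.sum_congr rfl fun j hj => ?_
  have hj' : j ≤ k := Nat.lt_succ_iff.mp (Finset.mem_range.mp hj)
  obtain ⟨i, rfl⟩ : ∃ i, k = j + i := ⟨k - j, (Nat.add_sub_cancel' hj').symm⟩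
  simp only [aCoef, Nat.add_sub_cancel_left]
  rw [Nat.cast_choose ℂ (Nat.le_add_right j i), Nat.add_sub_cancel_left, neg_pow]
  field_simp [fact_ne]
  ring

lemma J0_eq (b x : ℂ) : J0c (b*x) = ∑' j : ℕ, aCoef b x (j, 0) := by
  refine tsum_congr fun j => ?_
  simp [J0c, aCoef, mul_pow, Nat.factorial]
  ring

lemma split_eq (b x : ℂ) :
    ∑' p : ℕ × ℕ, aCoef b x p
      = (∑' j : ℕ, aCoef b x (j, 0)) + ∑' p : ℕ × ℕ, aCoef b x (p.1, p.2+1) := by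
  have hA : Summable (aCoef b x) := (summable_norm_aCoef b x).of_norm
  have hswap : Summable fun q : ℕ × ℕ => aCoef b x (q.2, q.1) :=
    (Equiv.prodComm ℕ ℕ).summable_iff.mpr hA
  have hslice : ∀ i : ℕ, Summable fun j : ℕ => aCoef b x (j, i) :=
    fun i => hswap.prod_factor i
  have hG : Summable fun i : ℕ => ∑' j : ℕ, aCoef b x (j, i) :=
    ⟨_, hswap.hasSum.prod_fiberwise (fun i => (hslice i).hasSum)⟩
  have hswap' : Summable fun q : ℕ × ℕ => aCoef b x (q.2, q.1+1) := by
    apply hA.comp_injective (i := fun q : ℕ × ℕ => (q.2, q.1+1))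
    intro q q' h
    simp only [Prod.mk.injEq] at h
    exact Prod.ext (by omega) h.1
  calc ∑' p : ℕ × ℕ, aCoef b x p
      = ∑' q : ℕ × ℕ, aCoef b x (q.2, q.1) := ((Equiv.prodComm ℕ ℕ).tsum_eq _).symm
    _ = ∑' i : ℕ, ∑' j : ℕ, aCoef b x (j, i) := Summable.tsum_prod' hswap hslice
    _ = (∑' j : ℕ, aCoef b x (j, 0)) + ∑' i : ℕ, ∑' j : ℕ, aCoef b x (j, i+1) :=
        Summable.tsum_eq_zero_add hG
    _ = (∑' j : ℕ, aCoef b x (j, 0)) + ∑' q : ℕ × ℕ, aCoef b x (q.2, q.1+1) := by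
        rw [Summable.tsum_prod' hswap' (fun i => (hslice (i+1)))]
    _ = (∑' j : ℕ, aCoef b x (j, 0)) + ∑' p : ℕ × ℕ, aCoef b x (p.1, p.2+1) := by
        rw [← (Equiv.prodComm ℕ ℕ).tsum_eq (fun p : ℕ × ℕ => aCoef b x (p.1, p.2+1))]
        rfl

noncomputable def cC (b x : ℂ) (m : ℕ) : ℂ := (-1)^m * (x*b)^m / ((m.factorial : ℂ))^2

noncomputable def dC (b : ℂ) (n : ℕ) : ℂ :=
  b^(n+1) * b^n / ((n.factorial : ℂ) * ((n+1).factorial : ℂ))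

lemma summable_norm_cC_mul (b x : ℂ) (z : ℂ) :
    Summable fun m : ℕ => ‖cC b x m * z^m‖ := by
  refine Summable.of_nonneg_of_le (fun m => norm_nonneg _) (fun m => ?_)
    (Real.summable_pow_div_factorial (‖x*b‖*‖z‖))
  have h1 : ‖cC b x m * z^m‖ = (‖x*b‖*‖z‖)^m / ((m.factorial : ℝ))^2 := by
    simp [cC, norm_div, norm_mul, norm_pow]
    ring
  rw [h1]
  apply div_le_div_of_nonneg_left (by positivity) (by positivity)
  calc ((m.factorial : ℝ)) = (m.factorial : ℝ) * 1 := by ring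
    _ ≤ (m.factorial : ℝ) * (m.factorial : ℝ) :=
        mul_le_mul_of_nonneg_left (one_le_fact m) (by positivity)
    _ = ((m.factorial : ℝ))^2 := by ring

lemma summable_norm_dC_mul (b : ℂ) (z : ℂ) :
    Summable fun n : ℕ => ‖dC b n * z^n‖ := by
  refine Summable.of_nonneg_of_le (fun n => norm_nonneg _) (fun n => ?_)
    ((Real.summable_pow_div_factorial (‖b‖^2*‖z‖)).mul_left ‖b‖)
  have h1 : ‖dC b n * z^n‖
      = ‖b‖ * (‖b‖^2*‖z‖)^n / ((n.factorial : ℝ) * ((n+1).factorial : ℝ)) := by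
    simp [dC, norm_div, norm_mul, norm_pow, pow_succ]
    ring
  rw [h1]
  calc ‖b‖ * (‖b‖^2*‖z‖)^n / ((n.factorial : ℝ) * ((n+1).factorial : ℝ))
      ≤ ‖b‖ * (‖b‖^2*‖z‖)^n / (n.factorial : ℝ) := by
        apply div_le_div_of_nonneg_left (by positivity) (by positivity)
        exact le_mul_of_one_le_right (by positivity) (one_le_fact _)
    _ = ‖b‖ * ((‖b‖^2*‖z‖)^n / (n.factorial : ℝ)) := by ring

lemma pointwise_eq (b x : ℂ) (t : ℝ) :
    J0c (x*(t*b)) * i1c b (b - t*b)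
      = ∑' p : ℕ × ℕ, (cC b x p.1 * (t:ℂ)^p.1) * (dC b p.2 * (1-(t:ℂ))^p.2) := by
  have h1 : J0c (x*(t*b)) = ∑' m : ℕ, cC b x m * (t:ℂ)^m := by
    refine tsum_congr fun m => ?_
    simp only [J0c, cC, mul_pow]
    ring
  have h2 : i1c b (b - t*b) = ∑' n : ℕ, dC b n * (1-(t:ℂ))^n := by
    refine tsum_congr fun n => ?_
    have hb : b - (t:ℂ)*b = (1-(t:ℂ))*b := by ring
    simp only [i1c, dC, hb, mul_pow]
    ring
  rw [h1, h2, tsum_mul_tsum_of_summable_norm (summable_norm_cC_mul b x t)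
    (summable_norm_dC_mul b (1-(t:ℂ)))]

set_option maxHeartbeats 1000000 in
lemma integral_repr (b x : ℂ) :
    (∫ t in (0:ℝ)..1, J0c (x*(t*b)) * i1c b (b - t*b))
      = ∑' p : ℕ × ℕ, (cC b x p.1 * dC b p.2) *
          ((p.1.factorial : ℂ) * (p.2.factorial : ℂ) / (((p.1+p.2+1).factorial) : ℂ)) := by
  have hcont : ∀ p : ℕ × ℕ, Continuous fun t : ℝ =>
      (cC b x p.1 * (t:ℂ)^p.1) * (dC b p.2 * (1-(t:ℂ))^p.2) := by
    intro p; fun_prop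
  set F : ℕ × ℕ → C(ℝ, ℂ) := fun p =>
    ⟨fun t => (cC b x p.1 * (t:ℂ)^p.1) * (dC b p.2 * (1-(t:ℂ))^p.2), hcont p⟩ with hF
  have hFnorm : Summable fun p : ℕ × ℕ =>
      ‖(F p).restrict (⟨Set.uIcc (0:ℝ) 1, isCompact_uIcc⟩ : TopologicalSpace.Compacts ℝ)‖ := by
    have hcd : Summable fun p : ℕ × ℕ => ‖cC b x p.1‖ * ‖dC b p.2‖ := by
      have hc : Summable fun m : ℕ => ‖cC b x m‖ := by
        simpa using summable_norm_cC_mul b x 1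
      have hd : Summable fun n : ℕ => ‖dC b n‖ := by
        simpa using summable_norm_dC_mul b 1
      exact hc.mul_of_nonneg hd (fun m => norm_nonneg _) (fun n => norm_nonneg _)
    refine Summable.of_nonneg_of_le (fun p => norm_nonneg _) (fun p => ?_) hcd
    refine (ContinuousMap.norm_le _ (by positivity)).mpr ?_
    rintro ⟨t, ht⟩
    have ht' : t ∈ Set.Icc (0:ℝ) 1 := by
      rwa [← Set.uIcc_of_le (by norm_num : (0:ℝ) ≤ 1)]
    obtain ⟨ht0, ht1⟩ := ht'
    have e1 : ‖((t:ℂ))^p.1‖ ≤ 1 := by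
      rw [norm_pow]
      apply pow_le_one₀ (norm_nonneg _)
      rw [Complex.norm_real, Real.norm_eq_abs]
      exact abs_le.mpr ⟨by linarith, by linarith⟩
    have e2 : ‖((1:ℂ)-(t:ℂ))^p.2‖ ≤ 1 := by
      rw [norm_pow]
      apply pow_le_one₀ (norm_nonneg _)
      rw [show ((1:ℂ) - (t:ℂ)) = (((1-t:ℝ)):ℂ) by push_cast; ring,
        Complex.norm_real, Real.norm_eq_abs]
      exact abs_le.mpr ⟨by linarith, by linarith⟩
    rw [ContinuousMap.restrict_apply]
    have habs : ‖(F p) t‖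
        = ‖cC b x p.1‖ * ‖dC b p.2‖ * (‖((t:ℂ))^p.1‖ * ‖((1:ℂ)-(t:ℂ))^p.2‖) := by
      simp only [hF, ContinuousMap.coe_mk, norm_mul]
      ring
    rw [habs]
    calc ‖cC b x p.1‖ * ‖dC b p.2‖ * (‖((t:ℂ))^p.1‖ * ‖((1:ℂ)-(t:ℂ))^p.2‖)
        ≤ ‖cC b x p.1‖ * ‖dC b p.2‖ * 1 := by
          apply mul_le_mul_of_nonneg_left _ (by positivity)
          exact mul_le_one₀ e1 (norm_nonneg _) e2
      _ = ‖cC b x p.1‖ * ‖dC b p.2‖ := by ring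
  have key := intervalIntegral.tsum_intervalIntegral_eq_of_summable_norm (a := 0) (b := 1) hFnorm
  have hleft : (∫ t in (0:ℝ)..1, J0c (x*(t*b)) * i1c b (b - t*b))
      = ∫ t in (0:ℝ)..1, ∑' p : ℕ × ℕ, F p t := by
    refine intervalIntegral.integral_congr fun t _ => ?_
    exact pointwise_eq b x t
  rw [hleft, ← key]
  refine tsum_congr fun p => ?_
  have : ∀ t : ℝ, F p t = (cC b x p.1 * dC b p.2) * ((t:ℂ)^p.1 * (1-(t:ℂ))^p.2) := by
    intro t; simp only [hF, ContinuousMap.coe_mk]; ring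
  rw [intervalIntegral.integral_congr (fun t _ => this t),
    intervalIntegral.integral_const_mul, beta_nat]

end I0aux

open I0aux in
/-- `I₀(2√(b(b−x))) = J₀(2√(bx)) + ∫₀ᵇ J₀(2√(xy)) · b I₁(2√(b(b−y)))/√(b(b−y)) dy`,
the integral over the segment from `0` to `b` being parametrized by `y = t·b`, `t ∈ [0,1]`. -/
theorem I0_integral_equation (b x : ℂ) :
    I0c (b * (b - x))
      = J0c (b * x) + b * ∫ t in (0:ℝ)..1, J0c (x * (t * b)) * i1c b (b - t * b) := by
  rw [lhs_eq b x, split_eq b x, ← J0_eq b x, integral_repr b x, ← tsum_mul_left]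
  congr 1
  refine tsum_congr fun p => ?_
  obtain ⟨m, n⟩ := p
  simp only [aCoef, cC, dC]
  have hmn : m + (n+1) = m + n + 1 := rfl
  rw [hmn]
  field_simp [fact_ne]
  rw [mul_div_mul_right _ _ (fact_ne n)]
  ring
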